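/- Let A \subset \mathbb{N} with \sum_{a \in A} 1/a = \infty and let s \ge 2. If every subset B of \mathbb{N}^2 with \sum_{(x,y) \in B} 1/(x^2+y^2) = \infty contains an s \times s axes-parallel grid, then A contains a (2s-1)-term arithmetic progression. -/

import Mathlib

open scoped ENNReal

-- numeric helper: (2a)⁻¹ ≤ (a-1) * (a²)⁻¹ for a ≥ 2
lemma stmt17_aux_num (a : ℕ) (ha : 2 ≤ a) :
    (2 * (a : ℝ≥0∞))⁻¹ ≤ ((a - 1 : ℕ) : ℝ≥0∞) * (((a : ℝ≥0∞)) ^ 2)⁻¹ := by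
  have ha0 : (a : ℝ≥0∞) ≠ 0 := by
    exact_mod_cast Nat.cast_ne_zero.mpr (by omega)
  have hat : (a : ℝ≥0∞) ≠ ⊤ := ENNReal.natCast_ne_top a
  have hsq0 : ((a : ℝ≥0∞)) ^ 2 ≠ 0 := pow_ne_zero _ ha0
  have hsqt : ((a : ℝ≥0∞)) ^ 2 ≠ ⊤ := by
    exact ENNReal.pow_ne_top hat
  rw [← ENNReal.mul_le_mul_iff_left hsq0 hsqt]
  have hr : ((a - 1 : ℕ) : ℝ≥0∞) * (((a : ℝ≥0∞)) ^ 2)⁻¹ * ((a : ℝ≥0∞)) ^ 2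
      = ((a - 1 : ℕ) : ℝ≥0∞) := by
    rw [mul_assoc, ENNReal.inv_mul_cancel hsq0 hsqt, mul_one]
  rw [hr]
  have hl : (2 * (a : ℝ≥0∞))⁻¹ * ((a : ℝ≥0∞)) ^ 2
      = ((a : ℝ≥0∞)) ^ 2 / (2 * (a : ℝ≥0∞)) := by
    rw [div_eq_mul_inv, mul_comm]
  rw [hl, ENNReal.div_le_iff_le_mul (Or.inl (by simp [ha0])) (Or.inl (by
    exact ENNReal.mul_ne_top (by simp) hat))]
  have : ((a : ℝ≥0∞)) ^ 2 = (((a ^ 2 : ℕ)) : ℝ≥0∞) := by push_cast; ring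
  rw [this]
  have : ((a - 1 : ℕ) : ℝ≥0∞) * (2 * (a : ℝ≥0∞)) = (((a - 1) * (2 * a) : ℕ) : ℝ≥0∞) := by
    push_cast; ring
  rw [this]
  have hnat : a ^ 2 ≤ (a - 1) * (2 * a) := by
    obtain ⟨b, rfl⟩ : ∃ b, a = b + 2 := ⟨a - 2, by omega⟩
    have : b + 2 - 1 = b + 1 := by omega
    rw [this]
    nlinarith
  exact_mod_cast hnat

-- nat helper : x² + (a-x)² ≤ a² when x ≤ a
lemma stmt17_aux_nat (a x : ℕ) (hx : x ≤ a) : x ^ 2 + (a - x) ^ 2 ≤ a ^ 2 := by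
  obtain ⟨y, rfl⟩ : ∃ y, a = x + y := ⟨a - x, by omega⟩
  have : x + y - x = y := by omega
  rw [this]
  nlinarith

theorem stmt17 (s : ℕ) (hs : 2 ≤ s) (A : Set ℕ) (hA : ∀ a ∈ A, 0 < a)
    (hdiv : ∑' a : A, (1 / (a : ℝ≥0∞)) = ⊤)
    (graham : ∀ B : Set (ℕ × ℕ), (∀ p ∈ B, 0 < p.1 ∧ 0 < p.2) →
      (∑' p : B, (1 / ((p.1.1 : ℝ≥0∞) ^ 2 + (p.1.2 : ℝ≥0∞) ^ 2)) = ⊤) →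
      ∃ x y l : ℕ, 0 < l ∧ ∀ i j : ℕ, i ≤ s - 1 → j ≤ s - 1 →
        (x + i * l, y + j * l) ∈ B) :
    ∃ a d : ℕ, 0 < d ∧ ∀ t : ℕ, t ≤ 2 * s - 2 → a + t * d ∈ A := by
  classical
  set B : Set (ℕ × ℕ) := {p | 0 < p.1 ∧ 0 < p.2 ∧ p.1 + p.2 ∈ A} with hBdef
  have hBpos : ∀ p ∈ B, 0 < p.1 ∧ 0 < p.2 := fun p hp => ⟨hp.1, hp.2.1⟩
  set f : ℕ × ℕ → ℝ≥0∞ := fun p => 1 / ((p.1 : ℝ≥0∞) ^ 2 + (p.2 : ℝ≥0∞) ^ 2) with hf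
  -- Step 1: the restricted harmonic sum over A ∩ [2, ∞) diverges
  have hS1 : ∑' a : ℕ, (if a ∈ A ∧ 2 ≤ a then ((a : ℝ≥0∞))⁻¹ else 0) = ⊤ := by
    by_contra hne
    have hle : (⊤ : ℝ≥0∞) ≤ (∑' a : ℕ, (if a ∈ A ∧ 2 ≤ a then ((a : ℝ≥0∞))⁻¹ else 0)) + 1 := by
      rw [← hdiv, tsum_subtype A (fun a => 1 / (a : ℝ≥0∞))]
      have hone : ∑' a : ℕ, (if a = 1 then (1 : ℝ≥0∞) else 0) = 1 := tsum_ite_eq 1 1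
      calc ∑' a : ℕ, A.indicator (fun a => 1 / (a : ℝ≥0∞)) a
          ≤ ∑' a : ℕ, ((if a ∈ A ∧ 2 ≤ a then ((a : ℝ≥0∞))⁻¹ else 0)
              + (if a = 1 then (1 : ℝ≥0∞) else 0)) := by
            apply ENNReal.tsum_le_tsum
            intro a
            by_cases haA : a ∈ A
            · have hpos := hA a haA
              rcases Nat.lt_or_ge a 2 with h1 | h2
              · have : a = 1 := by omega
                subst this
                simp [Set.indicator_of_mem haA]
              · rw [Set.indicator_of_mem haA]
                simp only [haA, h2, and_self, if_true, one_div]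
                exact le_self_add
            · rw [Set.indicator_of_notMem haA]
              exact zero_le
        _ = (∑' a : ℕ, (if a ∈ A ∧ 2 ≤ a then ((a : ℝ≥0∞))⁻¹ else 0)) + 1 := by
            rw [ENNReal.tsum_add, hone]
    have : (∑' a : ℕ, (if a ∈ A ∧ 2 ≤ a then ((a : ℝ≥0∞))⁻¹ else 0)) + 1 < ⊤ :=
      ENNReal.add_lt_top.mpr ⟨lt_top_iff_ne_top.mpr hne, ENNReal.one_lt_top⟩
    exact absurd (top_le_iff.mp hle) (ne_of_lt this)
  -- Step 2: halved version diverges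
  have hS2 : ∑' a : ℕ, (if a ∈ A ∧ 2 ≤ a then (2 * (a : ℝ≥0∞))⁻¹ else 0) = ⊤ := by
    have hpt : ∀ a : ℕ, (if a ∈ A ∧ 2 ≤ a then (2 * (a : ℝ≥0∞))⁻¹ else 0)
        = 2⁻¹ * (if a ∈ A ∧ 2 ≤ a then ((a : ℝ≥0∞))⁻¹ else 0) := by
      intro a
      split
      · rw [ENNReal.mul_inv (Or.inl (by norm_num)) (Or.inl (by norm_num))]
      · simp
    simp_rw [hpt]
    rw [ENNReal.tsum_mul_left, hS1, ENNReal.mul_top (by norm_num)]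
  -- Step 3: the tsum over B diverges
  have hdivB : ∑' p : B, (1 / ((p.1.1 : ℝ≥0∞) ^ 2 + (p.1.2 : ℝ≥0∞) ^ 2)) = ⊤ := by
    set G : ℕ × ℕ → ℝ≥0∞ := B.indicator f with hG
    set T : Set (ℕ × ℕ) := {q | 0 < q.2 ∧ q.2 < q.1} with hT
    set φ : T → ℕ × ℕ := fun q => ((q : ℕ × ℕ).2, (q : ℕ × ℕ).1 - (q : ℕ × ℕ).2) with hφ
    have hφinj : Function.Injective φ := by
      rintro ⟨⟨a, x⟩, ha⟩ ⟨⟨b, y⟩, hb⟩ h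
      simp only [hφ, Prod.mk.injEq] at h
      obtain ⟨hm1, hm2⟩ := ha
      obtain ⟨hn1, hn2⟩ := hb
      simp only at hm1 hm2 hn1 hn2
      apply Subtype.ext
      simp only [Prod.mk.injEq]
      omega
    have key : ∑' q : T, G (φ q) ≤ ∑' p : ℕ × ℕ, G p :=
      ENNReal.tsum_comp_le_tsum_of_injective hφinj G
    -- rewrite tsum over T as indicator sum over ℕ×ℕ and then as iterated sum
    have hTsum : ∑' q : T, G (φ q)
        = ∑' a : ℕ, ∑' x : ℕ, (if 0 < x ∧ x < a then G (x, a - x) else 0) := by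
      have h1 : ∑' q : T, G (φ q)
          = ∑' q : ℕ × ℕ, T.indicator (fun q => G (q.2, q.1 - q.2)) q :=
        tsum_subtype T (fun q => G (q.2, q.1 - q.2))
      have h2 : ∀ q : ℕ × ℕ, T.indicator (fun q => G (q.2, q.1 - q.2)) q
          = (fun a x => if 0 < x ∧ x < a then G (x, a - x) else 0) q.1 q.2 := by
        intro q
        by_cases hq : 0 < q.2 ∧ q.2 < q.1
        · have hqT : q ∈ T := hq
          rw [Set.indicator_of_mem hqT]
          simp [hq]
        · have hqT : q ∉ T := hq
          rw [Set.indicator_of_notMem hqT]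
          simp [hq]
      calc ∑' q : T, G (φ q)
          = ∑' q : ℕ × ℕ, T.indicator (fun q => G (q.2, q.1 - q.2)) q := h1
        _ = ∑' q : ℕ × ℕ, (fun a x => if 0 < x ∧ x < a then G (x, a - x) else 0) q.1 q.2 :=
            tsum_congr h2
        _ = ∑' a : ℕ, ∑' x : ℕ, (if 0 < x ∧ x < a then G (x, a - x) else 0) :=
            ENNReal.tsum_prod (f := fun a x => if 0 < x ∧ x < a then G (x, a - x) else 0)
    -- lower bound the iterated sum
    have hlow : ∑' a : ℕ, (if a ∈ A ∧ 2 ≤ a then (2 * (a : ℝ≥0∞))⁻¹ else 0)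
        ≤ ∑' a : ℕ, ∑' x : ℕ, (if 0 < x ∧ x < a then G (x, a - x) else 0) := by
      apply ENNReal.tsum_le_tsum
      intro a
      by_cases ha : a ∈ A ∧ 2 ≤ a
      · simp only [ha, if_true]
        calc (2 * (a : ℝ≥0∞))⁻¹
            ≤ ((a - 1 : ℕ) : ℝ≥0∞) * (((a : ℝ≥0∞)) ^ 2)⁻¹ := stmt17_aux_num a ha.2
          _ = ∑ x ∈ Finset.Ioo 0 a, (((a : ℝ≥0∞)) ^ 2)⁻¹ := by
              rw [Finset.sum_const, Nat.card_Ioo, nsmul_eq_mul]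
              norm_num
          _ ≤ ∑ x ∈ Finset.Ioo 0 a, (if 0 < x ∧ x < a then G (x, a - x) else 0) := by
              apply Finset.sum_le_sum
              intro x hx
              rw [Finset.mem_Ioo] at hx
              simp only [hx.1, hx.2, and_self, if_true]
              have hmem : ((x : ℕ), a - x) ∈ B := by
                refine ⟨hx.1, by omega, ?_⟩
                have : x + (a - x) = a := by omega
                simp only [hBdef, Set.mem_setOf_eq] at *
                rw [this]
                exact ha.1
              rw [hG, Set.indicator_of_mem hmem, hf]
              simp only [one_div]
              apply ENNReal.inv_le_inv.mpr
              have hcast : ((x : ℝ≥0∞)) ^ 2 + (((a - x : ℕ) : ℝ≥0∞)) ^ 2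
                  = (((x ^ 2 + (a - x) ^ 2 : ℕ)) : ℝ≥0∞) := by push_cast; ring
              calc ((x : ℝ≥0∞)) ^ 2 + (((a - x : ℕ) : ℝ≥0∞)) ^ 2
                  = (((x ^ 2 + (a - x) ^ 2 : ℕ)) : ℝ≥0∞) := hcast
                _ ≤ (((a ^ 2 : ℕ)) : ℝ≥0∞) := by
                    exact_mod_cast stmt17_aux_nat a x (le_of_lt hx.2)
                _ = ((a : ℝ≥0∞)) ^ 2 := by push_cast; ring
          _ ≤ ∑' x : ℕ, (if 0 < x ∧ x < a then G (x, a - x) else 0) :=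
              ENNReal.sum_le_tsum _
      · simp only [ha, if_false]
        exact zero_le
    have htop : (⊤ : ℝ≥0∞) ≤ ∑' p : ℕ × ℕ, G p := by
      calc (⊤ : ℝ≥0∞) = ∑' a : ℕ, (if a ∈ A ∧ 2 ≤ a then (2 * (a : ℝ≥0∞))⁻¹ else 0) := hS2.symm
        _ ≤ ∑' a : ℕ, ∑' x : ℕ, (if 0 < x ∧ x < a then G (x, a - x) else 0) := hlow
        _ = ∑' q : T, G (φ q) := hTsum.symm
        _ ≤ ∑' p : ℕ × ℕ, G p := key
    have : ∑' p : B, (1 / ((p.1.1 : ℝ≥0∞) ^ 2 + (p.1.2 : ℝ≥0∞) ^ 2)) = ∑' p : ℕ × ℕ, G p := by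
      rw [hG]
      exact tsum_subtype B f
    rw [this]
    exact top_le_iff.mp htop
  -- Step 4: apply graham and extract the AP
  obtain ⟨x, y, l, hl, hgrid⟩ := graham B hBpos hdivB
  refine ⟨x + y, l, hl, ?_⟩
  intro t ht
  set i := min t (s - 1) with hi
  set j := t - i with hj
  have h2 : i ≤ s - 1 := by omega
  have h3 : j ≤ s - 1 := by omega
  have h1 : i + j = t := by omega
  have hmem := hgrid i j h2 h3
  have hsum := hmem.2.2
  have heq : (x + i * l) + (y + j * l) = x + y + t * l := by
    rw [← h1]; ring
  rwa [heq] at hsum
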